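/- Let q = q(n) ∈ (0,1) with q = o(1), let s_a ∈ (0,1] be a constant, let m = m(n) be a sequence of positive integers with m q s_a² ≥ (1+ε) log n for a constant ε > 0, and let Δ_x ≥ 1 be a constant. Set x = Δ_x m q s_a² / log(1/q). If X_n is a Binomial(m, q s_a²) random variable, then n · P(X_n ≤ x) → 0 as n → ∞. -/

import Mathlib

open MeasureTheory ProbabilityTheory Filter

noncomputable section

namespace AttrAlign

/-- The law of a `Binomial(m, r)` random variable, as a measure on `ℕ`
(the success probability `r` is clamped to `[0,1]`). -/
def binomMeasure (m : ℕ) (r : ℝ) : Measure ℕ :=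
  ((PMF.binomial (min (Real.toNNReal r) 1) (min_le_right _ _) m).map
    (fun k => (k : ℕ))).toMeasure

end AttrAlign

open AttrAlign

lemma binomMeasure_eq (m : ℕ) (r : ℝ) :
    binomMeasure m r = ((PMF.binomial (min (Real.toNNReal r) 1) (min_le_right _ _) m).map
      Fin.val).toMeasure := by
  unfold binomMeasure
  congr 1
  show PMF.map id (PMF.map Fin.val _) = _
  rw [PMF.map_id]

open Classical in
lemma binomMeasure_toReal (m : ℕ) (r : ℝ) (hr0 : 0 ≤ r) (hr1 : r ≤ 1) (S : Set ℕ) :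
    (binomMeasure m r S).toReal =
      ∑ i : Fin (m+1), if (i:ℕ) ∈ S then r^(i:ℕ) * (1-r)^(m - (i:ℕ)) * (m.choose i) else 0 := by
  have hmin : min (Real.toNNReal r) 1 = Real.toNNReal r :=
    min_eq_left (Real.toNNReal_le_one.mpr hr1)
  have h1 : (((1 : NNReal) - Real.toNNReal r : NNReal) : ℝ) = 1 - r := by
    rw [NNReal.coe_sub (Real.toNNReal_le_one.mpr hr1), NNReal.coe_one, Real.coe_toNNReal r hr0]
  rw [binomMeasure_eq,
    PMF.toMeasure_map_apply Fin.val _ S (measurable_of_countable _) (by trivial),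
    PMF.toMeasure_apply_fintype,
    ENNReal.toReal_sum (fun a _ => by
      simp only [Set.indicator]
      split
      · exact PMF.apply_ne_top _ _
      · simp)]
  apply Finset.sum_congr rfl
  intro i _
  simp only [Set.indicator, Set.mem_preimage, PMF.binomial_apply, hmin, h1]
  split
  · rw [ENNReal.toReal_mul, ENNReal.toReal_mul, ENNReal.toReal_pow, ENNReal.toReal_pow,
      ENNReal.coe_toReal, Real.coe_toNNReal r hr0, ← ENNReal.coe_one, ← ENNReal.coe_sub,
      ENNReal.coe_toReal, h1]
    simp [Fin.last]
  · simp

open Classical in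
lemma binom_chernoff (m : ℕ) (r t x : ℝ) (hr0 : 0 ≤ r) (hr1 : r ≤ 1) (ht : 0 ≤ t) :
    (binomMeasure m r {k : ℕ | (k:ℝ) ≤ x}).toReal ≤
      Real.exp (t*x) * (r * Real.exp (-t) + (1-r))^m := by
  rw [binomMeasure_toReal m r hr0 hr1]
  have expand : Real.exp (t*x) * (r * Real.exp (-t) + (1-r))^m
      = ∑ i : Fin (m+1),
          Real.exp (t*x) * ((r*Real.exp (-t))^(i:ℕ) * (1-r)^(m-(i:ℕ)) * (m.choose i)) := by
    rw [add_pow, Finset.mul_sum, Fin.sum_univ_eq_sum_range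
      (fun i => Real.exp (t*x) * ((r*Real.exp (-t))^i * (1-r)^(m-i) * (m.choose i))) (m+1)]
  rw [expand]
  apply Finset.sum_le_sum
  intro i _
  split
  · rename_i h
    have h' : ((i:ℕ):ℝ) ≤ x := h
    have hpos : (0:ℝ) ≤ r^(i:ℕ) * (1-r)^(m-(i:ℕ)) * (m.choose i) :=
      mul_nonneg (mul_nonneg (pow_nonneg hr0 _) (pow_nonneg (by linarith) _))
        (Nat.cast_nonneg _)
    have he : (1:ℝ) ≤ Real.exp (t*x) * Real.exp (-t)^(i:ℕ) := by
      rw [← Real.exp_nat_mul, ← Real.exp_add]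
      have : (0:ℝ) ≤ t*x + (i:ℕ)*(-t) := by nlinarith
      calc (1:ℝ) = Real.exp 0 := Real.exp_zero.symm
        _ ≤ _ := Real.exp_le_exp.mpr this
    calc r^(i:ℕ) * (1-r)^(m-(i:ℕ)) * (m.choose i)
        = 1 * (r^(i:ℕ) * (1-r)^(m-(i:ℕ)) * (m.choose i)) := (one_mul _).symm
      _ ≤ (Real.exp (t*x) * Real.exp (-t)^(i:ℕ)) *
            (r^(i:ℕ) * (1-r)^(m-(i:ℕ)) * (m.choose i)) :=
          mul_le_mul_of_nonneg_right he hpos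
      _ = Real.exp (t*x) * ((r*Real.exp (-t))^(i:ℕ) * (1-r)^(m-(i:ℕ)) * (m.choose i)) := by
          rw [mul_pow]; ring
  · exact mul_nonneg (Real.exp_nonneg _)
      (mul_nonneg (mul_nonneg (pow_nonneg (mul_nonneg hr0 (Real.exp_nonneg _)) _)
        (pow_nonneg (by linarith) _)) (Nat.cast_nonneg _))


/-- Lower tail bound for Step 1 of Algorithm `AttrRich`: with
`x = Δ_x m q s_a² / log(1/q)` and `X_n ∼ Binomial(m, q s_a²)`, if `q = o(1)`,
`m q s_a² ≥ (1+ε) log n` for a constant `ε > 0`, and `Δ_x ≥ 1` is a constant, then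
`n P(X_n ≤ x) → 0`. -/
theorem binomial_lower_tail_attrRich
    (q : ℕ → ℝ) (m : ℕ → ℕ) (sa ε Δx : ℝ)
    (hq01 : ∀ n, 0 < q n ∧ q n < 1)
    (hq : Tendsto q atTop (nhds 0))
    (hsa : 0 < sa) (hsa1 : sa ≤ 1)
    (hm : ∀ n, 0 < m n)
    (hε : 0 < ε)
    (hmean : ∀ᶠ n : ℕ in atTop, (1 + ε) * Real.log n ≤ (m n : ℝ) * q n * sa ^ 2)
    (hΔx : 1 ≤ Δx) :
    Tendsto (fun n : ℕ => (n : ℝ) *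
        (binomMeasure (m n) (q n * sa ^ 2)
          {k : ℕ | (k : ℝ) ≤ Δx * ((m n : ℝ) * q n * sa ^ 2) / Real.log (1 / q n)}).toReal)
      atTop (nhds 0) := by
  classical
  set L : ℕ → ℝ := fun n => Real.log (1 / q n) with hLdef
  -- L → ∞
  have hLtop : Filter.Tendsto L Filter.atTop Filter.atTop := by
    apply Real.tendsto_log_atTop.comp
    simp only [one_div]
    exact (tendsto_nhdsWithin_of_tendsto_nhds_of_eventually_within q hq
      (Filter.Eventually.of_forall fun n => (hq01 n).1)).inv_tendsto_nhdsGT_zero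
  have hlogdiv : Filter.Tendsto (fun n => Real.log (L n) / L n) Filter.atTop (nhds 0) :=
    (Real.isLittleO_log_id_atTop.tendsto_div_nhds_zero).comp hLtop
  -- eventually facts
  have hEv : ∀ᶠ n : ℕ in Filter.atTop,
      (n:ℝ) * (binomMeasure (m n) (q n * sa ^ 2)
          {k : ℕ | (k : ℝ) ≤ Δx * ((m n : ℝ) * q n * sa ^ 2) / L n}).toReal
        ≤ Real.exp (-(ε/2) * Real.log n) := by
    have h1 : ∀ᶠ n : ℕ in Filter.atTop, (1:ℝ) ≤ L n := hLtop.eventually_ge_atTop 1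
    have h2 : ∀ᶠ n : ℕ in Filter.atTop,
        Δx * (Real.log (L n) / L n) + 1 / L n ≤ ε / (2*(1+ε)) := by
      have ht0 : Filter.Tendsto (fun n => Δx * (Real.log (L n) / L n) + 1 / L n)
          Filter.atTop (nhds 0) := by
        have := (hlogdiv.const_mul Δx).add (hLtop.inv_tendsto_atTop)
        simpa [one_div] using this
      have hc : (0:ℝ) < ε / (2*(1+ε)) := by positivity
      exact ht0.eventually_le_const hc
    have h3 : ∀ᶠ n : ℕ in Filter.atTop, (1:ℕ) ≤ n := Filter.eventually_ge_atTop 1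
    filter_upwards [h1, h2, h3, hmean] with n hL1 hsmall hn1 hmn
    set r : ℝ := q n * sa ^ 2 with hrdef
    have hq0 := (hq01 n).1
    have hq1 := (hq01 n).2
    have hr0 : 0 ≤ r := by positivity
    have hr1 : r ≤ 1 := by nlinarith [sq_nonneg sa]
    have hLpos : (0:ℝ) < L n := lt_of_lt_of_le one_pos hL1
    set μ : ℝ := (m n : ℝ) * q n * sa ^ 2 with hμdef
    have hμr : μ = (m n : ℝ) * r := by rw [hμdef, hrdef]; ring
    have hlogn0 : (0:ℝ) ≤ Real.log n := Real.log_natCast_nonneg n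
    have hμ0 : 0 ≤ μ := by positivity
    set t : ℝ := Real.log (L n) with htdef
    have ht0 : 0 ≤ t := Real.log_nonneg hL1
    have hxval : Δx * μ / L n = Δx * μ / L n := rfl
    -- Chernoff
    have hcher := binom_chernoff (m n) r t (Δx * μ / L n) hr0 hr1 ht0
    have hexp_t : Real.exp (-t) = 1 / L n := by
      rw [Real.exp_neg, Real.exp_log hLpos, one_div]
    -- bound the base
    have hbase0 : 0 ≤ r * Real.exp (-t) + (1-r) := by
      have := Real.exp_nonneg (-t); nlinarith
    have hbase : r * Real.exp (-t) + (1-r) ≤ Real.exp (r * Real.exp (-t) - r) := by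
      have := Real.add_one_le_exp (r * Real.exp (-t) - r)
      linarith
    have hpow : (r * Real.exp (-t) + (1-r))^(m n) ≤
        Real.exp ((m n : ℝ) * (r * Real.exp (-t) - r)) := by
      calc (r * Real.exp (-t) + (1-r))^(m n)
          ≤ (Real.exp (r * Real.exp (-t) - r))^(m n) := pow_le_pow_left₀ hbase0 hbase _
        _ = Real.exp ((m n : ℝ) * (r * Real.exp (-t) - r)) := (Real.exp_nat_mul _ _).symm
    have hP : (binomMeasure (m n) r {k : ℕ | (k : ℝ) ≤ Δx * μ / L n}).toReal ≤
        Real.exp (t * (Δx * μ / L n) + (m n : ℝ) * (r * Real.exp (-t) - r)) := by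
      rw [Real.exp_add]
      calc _ ≤ Real.exp (t * (Δx * μ / L n)) * (r * Real.exp (-t) + (1-r))^(m n) := hcher
        _ ≤ _ := mul_le_mul_of_nonneg_left hpow (Real.exp_nonneg _)
    have hn0 : (0:ℝ) < n := by exact_mod_cast hn1
    have hexponent : Real.log n + (t * (Δx * μ / L n) + (m n : ℝ) * (r * Real.exp (-t) - r))
        ≤ -(ε/2) * Real.log n := by
      rw [hexp_t]
      have e1 : t * (Δx * μ / L n) = μ * (Δx * (Real.log (L n) / L n)) := by
        rw [htdef]; field_simp
      have e2 : (m n : ℝ) * (r * (1 / L n) - r) = μ * (1 / L n) - μ := by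
        rw [hμr]; ring
      rw [e1, e2]
      have key : μ * (Δx * (Real.log (L n) / L n)) + μ * (1 / L n) ≤ μ * (ε / (2*(1+ε))) := by
        have := mul_le_mul_of_nonneg_left hsmall hμ0
        linarith [this]
      have hδ1 : ε / (2*(1+ε)) - 1 ≤ 0 := by
        rw [sub_nonpos, div_le_one (by positivity)]; linarith
      have step2 : μ * (ε/(2*(1+ε))) - μ ≤ ((1+ε) * Real.log n) * (ε/(2*(1+ε)) - 1) := by
        have h := mul_le_mul_of_nonpos_right hmn hδ1
        nlinarith [h]
      have step3 : ((1+ε) * Real.log n) * (ε/(2*(1+ε)) - 1)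
          = -(ε/2) * Real.log n - Real.log n := by
        field_simp
        ring
      linarith [key]
    calc (n:ℝ) * (binomMeasure (m n) r {k : ℕ | (k : ℝ) ≤ Δx * μ / L n}).toReal
        ≤ (n:ℝ) * Real.exp (t * (Δx * μ / L n) + (m n : ℝ) * (r * Real.exp (-t) - r)) :=
          mul_le_mul_of_nonneg_left hP (le_of_lt hn0)
      _ = Real.exp (Real.log n) *
            Real.exp (t * (Δx * μ / L n) + (m n : ℝ) * (r * Real.exp (-t) - r)) := by
          rw [Real.exp_log hn0]
      _ = Real.exp (Real.log n + (t * (Δx * μ / L n) + (m n : ℝ) * (r * Real.exp (-t) - r))) :=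
          (Real.exp_add _ _).symm
      _ ≤ Real.exp (-(ε/2) * Real.log n) := Real.exp_le_exp.mpr hexponent
  -- squeeze
  have hg : Filter.Tendsto (fun n : ℕ => Real.exp (-(ε/2) * Real.log n))
      Filter.atTop (nhds 0) := by
    have hlogn : Filter.Tendsto (fun n : ℕ => Real.log n) Filter.atTop Filter.atTop :=
      Real.tendsto_log_atTop.comp tendsto_natCast_atTop_atTop
    have : Filter.Tendsto (fun n : ℕ => (ε/2) * Real.log n) Filter.atTop Filter.atTop :=
      hlogn.const_mul_atTop (by positivity)
    have := Real.tendsto_exp_neg_atTop_nhds_zero.comp this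
    simpa [Function.comp_def, neg_mul] using this
  refine tendsto_of_tendsto_of_tendsto_of_le_of_le' tendsto_const_nhds hg ?_ hEv
  exact Filter.Eventually.of_forall fun n => mul_nonneg (Nat.cast_nonneg n) ENNReal.toReal_nonneg
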